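/- arXiv:2006.10926 — 3 statements merged into one kernel-verified Lean document; each statement's English description precedes it below -/
import Mathlib

section
/- If f₁ is measurable and regularly varying at infinity with index p₁, f₂ is measurable and regularly varying at infinity with index p₂, and f₂(s) → ∞ as s → ∞, then the composition f₁ ∘ f₂ is regularly varying at infinity with index p₁·p₂. -/
open Filter Topology MeasureTheory Pointwise

/-- Regular variation at infinity with index `p`. -/
def RegularlyVaryingAtTop (f : ℝ → ℝ) (p : ℝ) : Prop :=
  ∀ c : ℝ, 0 < c → Tendsto (fun s => f (c * s) / f s) atTop (𝓝 (c ^ p))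

/-- Sequential instance of the uniform convergence theorem for additively
written regularly varying functions. -/
lemma seq_uct (h : ℝ → ℝ) (hm : Measurable h) (p x₀ : ℝ)
    (H : ∀ t : ℝ, Tendsto (fun s => h (s + t) - h s) atTop (𝓝 (p * t)))
    (x y : ℕ → ℝ) (hx : Tendsto x atTop (𝓝 x₀)) (hy : Tendsto y atTop atTop) :
    Tendsto (fun n => h (y n + x n) - h (y n)) atTop (𝓝 (p * x₀)) := by
  rw [Metric.tendsto_atTop]
  intro ε hε
  set ε' := ε / 4 with hε'def
  have hε'pos : 0 < ε' := by positivity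
  -- the two families of "good" sets
  set S : (ℕ → ℝ) → ℝ → ℕ → Set ℝ := fun z a N =>
    Set.Icc a (a + 3) ∩ ⋂ m, {t | N ≤ m → |h (z m + t) - h (z m) - p * t| ≤ ε'} with hS
  have measS : ∀ z a N, MeasurableSet (S z a N) := by
    intro z a N
    refine measurableSet_Icc.inter (MeasurableSet.iInter fun m => ?_)
    by_cases hNm : N ≤ m
    · simp only [hNm, true_implies]
      have hg : Measurable fun t => |h (z m + t) - h (z m) - p * t| :=
        (((hm.comp (measurable_const.add measurable_id)).sub measurable_const).sub
          (measurable_id.const_mul p)).abs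
      exact measurableSet_le hg measurable_const
    · simp only [hNm, false_implies, Set.setOf_true]
      exact MeasurableSet.univ
  have monoS : ∀ z a, Monotone (S z a) := by
    intro z a N M hNM t ht
    refine ⟨ht.1, Set.mem_iInter.2 fun m hMm => ?_⟩
    exact Set.mem_iInter.1 ht.2 m (hNM.trans hMm)
  have unionS : ∀ (z : ℕ → ℝ) (a : ℝ), Tendsto z atTop atTop →
      ⋃ N, S z a N = Set.Icc a (a + 3) := by
    intro z a hz
    apply Set.Subset.antisymm
    · exact Set.iUnion_subset fun N => Set.inter_subset_left
    · intro t ht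
      have h1 : Tendsto (fun m => h (z m + t) - h (z m)) atTop (𝓝 (p * t)) :=
        (H t).comp hz
      rw [Metric.tendsto_atTop] at h1
      obtain ⟨N, hN⟩ := h1 ε' hε'pos
      refine Set.mem_iUnion.2 ⟨N, ht, Set.mem_iInter.2 fun m hm' => ?_⟩
      have := hN m hm'
      rw [Real.dist_eq] at this
      exact this.le
  have volS : ∀ (z : ℕ → ℝ) (a : ℝ), Tendsto z atTop atTop →
      ∃ N, ENNReal.ofReal (11/4) < volume (S z a N) := by
    intro z a hz
    have h1 : Tendsto (volume ∘ S z a) atTop (𝓝 (volume (⋃ N, S z a N))) :=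
      tendsto_measure_iUnion_atTop (monoS z a)
    rw [unionS z a hz, Real.volume_Icc, show a + 3 - a = 3 by ring] at h1
    have h2 : ENNReal.ofReal (11/4) < ENNReal.ofReal 3 := by
      rw [ENNReal.ofReal_lt_ofReal_iff (by norm_num)]; norm_num
    exact (h1.eventually (eventually_gt_nhds h2)).exists
  obtain ⟨N₁, hN₁⟩ := volS y x₀ hy
  obtain ⟨N₂, hN₂⟩ := volS (fun m => y m + x m) 0 (hy.atTop_add hx)
  -- closeness of x n to x₀
  have hδ : 0 < min 1 (ε' / (|p| + 1)) := by positivity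
  rw [Metric.tendsto_atTop] at hx
  obtain ⟨N₃, hN₃⟩ := hx _ hδ
  refine ⟨max (max N₁ N₂) N₃, fun n hn => ?_⟩
  have hnN₁ : N₁ ≤ n := le_trans (le_max_left _ _) (le_trans (le_max_left _ _) hn)
  have hnN₂ : N₂ ≤ n := le_trans (le_max_right _ _) (le_trans (le_max_left _ _) hn)
  have hnN₃ : N₃ ≤ n := le_trans (le_max_right _ _) hn
  have hxn : |x n - x₀| < min 1 (ε' / (|p| + 1)) := by
    have := hN₃ n hnN₃; rwa [Real.dist_eq] at this
  have hxn1 : |x n - x₀| ≤ 1 := hxn.le.trans (min_le_left _ _)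
  have hxn2 : |x n - x₀| ≤ ε' / (|p| + 1) := hxn.le.trans (min_le_right _ _)
  -- find a common point
  have hsub1 : S y x₀ N₁ ⊆ Set.Icc (x₀ - 1) (x₀ + 4) :=
    Set.inter_subset_left.trans (Set.Icc_subset_Icc (by linarith) (by linarith))
  have hsub2 : (x n +ᵥ S (fun m => y m + x m) 0 N₂) ⊆ Set.Icc (x₀ - 1) (x₀ + 4) := by
    rintro t ⟨b, hb, rfl⟩
    have hb' : b ∈ Set.Icc (0:ℝ) (0 + 3) := hb.1
    have h1 := abs_le.1 hxn1
    constructor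
    · simp only [vadd_eq_add]
      have := hb'.1; cases' abs_le.1 hxn1 with h2 h3; linarith
    · simp only [vadd_eq_add]
      have := hb'.2; cases' abs_le.1 hxn1 with h2 h3; linarith
  have hvol : volume (Set.Icc (x₀ - 1) (x₀ + 4)) <
      volume (S y x₀ N₁) + volume (x n +ᵥ S (fun m => y m + x m) 0 N₂) := by
    rw [measure_vadd, Real.volume_Icc, show x₀ + 4 - (x₀ - 1) = 5 by ring]
    calc ENNReal.ofReal 5 < ENNReal.ofReal (11/4) + ENNReal.ofReal (11/4) := by
          rw [← ENNReal.ofReal_add (by norm_num) (by norm_num)]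
          rw [ENNReal.ofReal_lt_ofReal_iff (by norm_num)]; norm_num
      _ ≤ _ := add_le_add hN₁.le hN₂.le
  obtain ⟨t, htA, htB⟩ := nonempty_inter_of_measure_lt_add' volume
    (measS y x₀ N₁) hsub1 hsub2 hvol
  obtain ⟨b, hb, rfl⟩ := htB
  -- extract the two estimates
  have e1 : |h (y n + (x n +ᵥ b)) - h (y n) - p * (x n +ᵥ b)| ≤ ε' :=
    Set.mem_iInter.1 htA.2 n hnN₁
  have e2 : |h ((y n + x n) + b) - h (y n + x n) - p * b| ≤ ε' :=
    Set.mem_iInter.1 hb.2 n hnN₂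
  have hvadd : (x n +ᵥ b) = x n + b := rfl
  rw [hvadd] at e1
  have e2' : |h (y n + (x n + b)) - h (y n + x n) - p * b| ≤ ε' := by
    rwa [show y n + x n + b = y n + (x n + b) by ring] at e2
  have key : |h (y n + x n) - h (y n) - p * x n| ≤ 2 * ε' := by
    have := abs_sub (h (y n + (x n + b)) - h (y n) - p * (x n + b))
      (h (y n + (x n + b)) - h (y n + x n) - p * b)
    calc |h (y n + x n) - h (y n) - p * x n|
        = |(h (y n + (x n + b)) - h (y n) - p * (x n + b)) -
            (h (y n + (x n + b)) - h (y n + x n) - p * b)| := by ring_nf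
      _ ≤ |h (y n + (x n + b)) - h (y n) - p * (x n + b)| +
            |h (y n + (x n + b)) - h (y n + x n) - p * b| := abs_sub _ _
      _ ≤ ε' + ε' := add_le_add e1 e2'
      _ = 2 * ε' := by ring
  have key2 : |p * x n - p * x₀| ≤ ε' := by
    rw [← mul_sub, abs_mul]
    calc |p| * |x n - x₀| ≤ |p| * (ε' / (|p| + 1)) := by
          apply mul_le_mul_of_nonneg_left hxn2 (abs_nonneg p)
      _ ≤ ε' := by
          have h1 : (0:ℝ) < |p| + 1 := by positivity
          have h2 : |p| * (ε' / (|p| + 1)) ≤ (|p| + 1) * (ε' / (|p| + 1)) :=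
            mul_le_mul_of_nonneg_right (by linarith [abs_nonneg p]) (by positivity)
          have h3 : (|p| + 1) * (ε' / (|p| + 1)) = ε' := by field_simp
          linarith
  rw [Real.dist_eq]
  calc |h (y n + x n) - h (y n) - p * x₀|
      ≤ |h (y n + x n) - h (y n) - p * x n| + |p * x n - p * x₀| := by
        have := abs_add_le (h (y n + x n) - h (y n) - p * x n) (p * x n - p * x₀)
        calc |h (y n + x n) - h (y n) - p * x₀|
            = |(h (y n + x n) - h (y n) - p * x n) + (p * x n - p * x₀)| := by ring_nf
          _ ≤ _ := abs_add_le _ _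
    _ ≤ 2 * ε' + ε' := add_le_add key key2
    _ = 3 * (ε/4) := by rw [hε'def]; ring
    _ < ε := by linarith

theorem rv_comp (f₁ f₂ : ℝ → ℝ) (p₁ p₂ : ℝ)
    (hmeas₁ : Measurable f₁) (hmeas₂ : Measurable f₂)
    (hpos₁ : ∀ s : ℝ, 0 < s → 0 < f₁ s) (hpos₂ : ∀ s : ℝ, 0 < s → 0 < f₂ s)
    (hrv₁ : RegularlyVaryingAtTop f₁ p₁) (hrv₂ : RegularlyVaryingAtTop f₂ p₂)
    (hinf : Tendsto f₂ atTop atTop) :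
    RegularlyVaryingAtTop (f₁ ∘ f₂) (p₁ * p₂) := by
  intro c hc
  set h : ℝ → ℝ := fun t => Real.log (f₁ (Real.exp t)) with hh
  have hmh : Measurable h := Real.measurable_log.comp (hmeas₁.comp Real.measurable_exp)
  have H : ∀ t : ℝ, Tendsto (fun s => h (s + t) - h s) atTop (𝓝 (p₁ * t)) := by
    intro t
    have h1 : Tendsto (fun u : ℝ => f₁ (Real.exp t * u) / f₁ u) atTop
        (𝓝 (Real.exp t ^ p₁)) := hrv₁ _ (Real.exp_pos t)
    have h2 := (Real.continuousAt_log
      (ne_of_gt (Real.rpow_pos_of_pos (Real.exp_pos t) p₁))).tendsto.comp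
      (h1.comp Real.tendsto_exp_atTop)
    rw [Real.log_rpow (Real.exp_pos t), Real.log_exp] at h2
    refine h2.congr fun s => ?_
    have p1 : 0 < f₁ (Real.exp s) := hpos₁ _ (Real.exp_pos s)
    have p2 : 0 < f₁ (Real.exp t * Real.exp s) := hpos₁ _ (by positivity)
    simp only [Function.comp, hh]
    rw [Real.exp_add, mul_comm (Real.exp s), Real.log_div p2.ne' p1.ne']
  rw [tendsto_iff_seq_tendsto]
  intro u hu
  have hu1 : ∀ᶠ n in atTop, (1:ℝ) ≤ u n := hu.eventually_ge_atTop 1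
  set x : ℕ → ℝ := fun n => Real.log (f₂ (c * u n)) - Real.log (f₂ (u n)) with hxdef
  set y : ℕ → ℝ := fun n => Real.log (f₂ (u n)) with hydef
  have hy : Tendsto y atTop atTop := Real.tendsto_log_atTop.comp (hinf.comp hu)
  have hx : Tendsto x atTop (𝓝 (p₂ * Real.log c)) := by
    have h1 := (hrv₂ c hc).comp hu
    have h2 := (Real.continuousAt_log
      (ne_of_gt (Real.rpow_pos_of_pos hc p₂))).tendsto.comp h1
    rw [Real.log_rpow hc] at h2
    refine h2.congr' ?_
    filter_upwards [hu1] with n hn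
    have pu : (0:ℝ) < u n := by linarith
    have p1 : 0 < f₂ (u n) := hpos₂ _ pu
    have p2 : 0 < f₂ (c * u n) := hpos₂ _ (by positivity)
    exact Real.log_div p2.ne' p1.ne'
  have hk := seq_uct h hmh p₁ (p₂ * Real.log c) H x y hx hy
  have hexp := (Real.continuous_exp.tendsto _).comp hk
  have hval : Real.exp (p₁ * (p₂ * Real.log c)) = c ^ (p₁ * p₂) := by
    rw [Real.rpow_def_of_pos hc]; congr 1; ring
  rw [hval] at hexp
  refine hexp.congr' ?_
  filter_upwards [hu1] with n hn
  have pu : (0:ℝ) < u n := by linarith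
  have pcu : (0:ℝ) < c * u n := by positivity
  have p2u : 0 < f₂ (u n) := hpos₂ _ pu
  have p2cu : 0 < f₂ (c * u n) := hpos₂ _ pcu
  have p1u : 0 < f₁ (f₂ (u n)) := hpos₁ _ p2u
  have p1cu : 0 < f₁ (f₂ (c * u n)) := hpos₁ _ p2cu
  have e1 : y n + x n = Real.log (f₂ (c * u n)) := by simp [hxdef, hydef]
  show Real.exp (h (y n + x n) - h (y n)) = (f₁ ∘ f₂) (c * u n) / (f₁ ∘ f₂) (u n)
  simp only [Function.comp, hh]
  rw [e1, hydef, Real.exp_log p2u, Real.exp_log p2cu, Real.exp_sub,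
    Real.exp_log p1u, Real.exp_log p1cu]
end

section
/- Let X be a nonnegative random variable with X > 0 almost surely such that P(X ≤ u)/u → κ as u ↓ 0 for some constant κ ∈ (0,∞). Let f : (0,∞) → (0,∞) be measurable, regularly varying at 0 with index p > 0, and satisfying inf_{s ≥ s₀} f(s) > 0 for every s₀ > 0. If p < 1 then E[1/f(X)] < ∞, while if p > 1 then E[1/f(X)] = ∞. -/
open MeasureTheory ENNReal Filter Topology

/-- Regular variation at 0 (from the right) with index `p`. -/
def RegularlyVaryingAtZero (f : ℝ → ℝ) (p : ℝ) : Prop :=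
  ∀ c : ℝ, 0 < c → Tendsto (fun s => f (c * s) / f s) (𝓝[>] (0 : ℝ)) (𝓝 (c ^ p))

open Set Pointwise

lemma log_form {f : ℝ → ℝ} {p : ℝ} (hfpos : ∀ s : ℝ, 0 < s → 0 < f s)
    (hrv : RegularlyVaryingAtZero f p) {c : ℝ} (hc : 0 < c) :
    Tendsto (fun s => Real.log (f (c * s)) - Real.log (f s)) (𝓝[>] (0 : ℝ))
      (𝓝 (p * Real.log c)) := by
  have h1 : Tendsto (fun s => Real.log (f (c * s) / f s)) (𝓝[>] (0 : ℝ))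
      (𝓝 (Real.log (c ^ p))) := by
    exact (Real.continuousAt_log (by positivity)).tendsto.comp (hrv c hc)
  rw [Real.log_rpow hc] at h1
  refine h1.congr' ?_
  filter_upwards [self_mem_nhdsWithin] with s hs
  rw [Real.log_div (ne_of_gt (hfpos _ (mul_pos hc hs))) (ne_of_gt (hfpos _ hs))]

lemma uct {f : ℝ → ℝ} {p : ℝ} (hf : Measurable f) (hfpos : ∀ s : ℝ, 0 < s → 0 < f s)
    (hrv : RegularlyVaryingAtZero f p) {ε : ℝ} (hε : 0 < ε) :
    ∃ s₁ > (0:ℝ), ∀ s, 0 < s → s ≤ s₁ → ∀ c : ℝ, 1/2 ≤ c → c ≤ 1 →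
      |Real.log (f (c * s)) - Real.log (f s) - p * Real.log c| ≤ ε := by
  by_contra hcon
  push_neg at hcon
  have hc' : ∀ m : ℕ, ∃ s : ℝ, 0 < s ∧ s ≤ 1/((m:ℝ)+1) ∧ ∃ c : ℝ, 1/2 ≤ c ∧ c ≤ 1 ∧
      ε < |Real.log (f (c * s)) - Real.log (f s) - p * Real.log c| := by
    intro m
    obtain ⟨s, hs, h⟩ := hcon (1/((m:ℝ)+1)) (by positivity)
    obtain ⟨hs1, c, hc1, hc2, hc3⟩ := h
    exact ⟨s, hs, hs1, c, hc1, hc2, hc3⟩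
  choose S hS0 hSle C hC1 hC2 hdev using hc'
  have tendS : Tendsto S atTop (𝓝[>] (0:ℝ)) := by
    rw [tendsto_nhdsWithin_iff]
    constructor
    · refine squeeze_zero (fun m => (hS0 m).le) hSle ?_
      exact tendsto_one_div_add_atTop_nhds_zero_nat
    · exact Eventually.of_forall fun m => hS0 m
  have tendCS : Tendsto (fun m => C m * S m) atTop (𝓝[>] (0:ℝ)) := by
    rw [tendsto_nhdsWithin_iff]
    constructor
    · refine squeeze_zero (fun m => (mul_pos (lt_of_lt_of_le one_half_pos (hC1 m)) (hS0 m)).le)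
        (fun m => ?_) tendsto_one_div_add_atTop_nhds_zero_nat
      calc C m * S m ≤ 1 * S m := by
            exact mul_le_mul_of_nonneg_right (hC2 m) (hS0 m).le
        _ = S m := one_mul _
        _ ≤ 1/(m+1) := hSle m
    · exact Eventually.of_forall fun m => mul_pos (lt_of_lt_of_le one_half_pos (hC1 m)) (hS0 m)
  -- the "good" sets
  set A : ℕ → Set ℝ := fun m => {u | u ∈ Icc (1:ℝ) 4 ∧
    |Real.log (f (u * S m)) - Real.log (f (S m)) - p * Real.log u| ≤ ε/4} with hA
  set B : ℕ → Set ℝ := fun m => {u | u ∈ Icc (1:ℝ) 4 ∧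
    |Real.log (f (u * (C m * S m))) - Real.log (f (C m * S m)) - p * Real.log u| ≤ ε/4} with hB
  have meas_aux : ∀ (a : ℝ), MeasurableSet {u : ℝ | u ∈ Icc (1:ℝ) 4 ∧
      |Real.log (f (u * a)) - Real.log (f a) - p * Real.log u| ≤ ε/4} := by
    intro a
    have m1 : Measurable fun u : ℝ =>
        |Real.log (f (u * a)) - Real.log (f a) - p * Real.log u| :=
      (((Real.measurable_log.comp (hf.comp (measurable_mul_const a))).sub
        measurable_const).sub (Real.measurable_log.const_mul p)).abs
    exact measurableSet_Icc.inter (m1 measurableSet_Iic)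
  have hAmem : ∀ u ∈ Icc (1:ℝ) 4, ∀ᶠ m in atTop, u ∈ A m := by
    intro u hu
    have hu0 : (0:ℝ) < u := lt_of_lt_of_le one_pos hu.1
    have htd := (log_form hfpos hrv hu0).comp tendS
    filter_upwards [htd.eventually (Metric.ball_mem_nhds _ (show (0:ℝ) < ε/4 by positivity))]
      with m hm
    refine ⟨hu, ?_⟩
    have : dist ((fun s => Real.log (f (u * s)) - Real.log (f s)) (S m)) (p * Real.log u) < ε/4 := hm
    rw [Real.dist_eq] at this
    exact this.le
  have hBmem : ∀ u ∈ Icc (1:ℝ) 4, ∀ᶠ m in atTop, u ∈ B m := by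
    intro u hu
    have hu0 : (0:ℝ) < u := lt_of_lt_of_le one_pos hu.1
    have htd := (log_form hfpos hrv hu0).comp tendCS
    filter_upwards [htd.eventually (Metric.ball_mem_nhds _ (show (0:ℝ) < ε/4 by positivity))]
      with m hm
    refine ⟨hu, ?_⟩
    have : dist ((fun s => Real.log (f (u * s)) - Real.log (f s)) (C m * S m))
        (p * Real.log u) < ε/4 := hm
    rw [Real.dist_eq] at this
    exact this.le
  -- measures converge to volume (Icc 1 4) = 3
  have volIcc : volume (Icc (1:ℝ) 4) = ENNReal.ofReal 3 := by
    rw [Real.volume_Icc]; norm_num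
  have volA : Tendsto (fun m => volume (A m)) atTop (𝓝 (volume (Icc (1:ℝ) 4))) := by
    refine tendsto_measure_of_tendsto_indicator atTop (fun m => meas_aux _) measurableSet_Icc
      (by rw [volIcc]; exact ofReal_ne_top) (Eventually.of_forall fun m u hu => hu.1) ?_
    intro u
    by_cases hu : u ∈ Icc (1:ℝ) 4
    · filter_upwards [hAmem u hu] with m hm using ⟨fun _ => hu, fun _ => hm⟩
    · exact Eventually.of_forall fun m => ⟨fun h => absurd h.1 hu, fun h => absurd h hu⟩
  have volB : Tendsto (fun m => volume (B m)) atTop (𝓝 (volume (Icc (1:ℝ) 4))) := by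
    refine tendsto_measure_of_tendsto_indicator atTop (fun m => meas_aux _) measurableSet_Icc
      (by rw [volIcc]; exact ofReal_ne_top) (Eventually.of_forall fun m u hu => hu.1) ?_
    intro u
    by_cases hu : u ∈ Icc (1:ℝ) 4
    · filter_upwards [hBmem u hu] with m hm using ⟨fun _ => hu, fun _ => hm⟩
    · exact Eventually.of_forall fun m => ⟨fun h => absurd h.1 hu, fun h => absurd h hu⟩
  have hlt : ENNReal.ofReal (11/4) < volume (Icc (1:ℝ) 4) := by
    rw [volIcc]; exact (ofReal_lt_ofReal_iff (by norm_num)).2 (by norm_num)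
  obtain ⟨m, hAm, hBm⟩ :=
    ((volA.eventually (eventually_gt_nhds hlt)).and
      (volB.eventually (eventually_gt_nhds hlt))).exists
  have hc0 : (0:ℝ) < C m := lt_of_lt_of_le one_half_pos (hC1 m)
  set T : Set ℝ := (fun x => (C m)⁻¹ * x) ⁻¹' (B m) with hTdef
  have hTsmul : T = (C m) • (B m) := by
    ext x
    rw [Set.mem_smul_set_iff_inv_smul_mem₀ hc0.ne']
    simp [hTdef, smul_eq_mul]
  have hTmeas : MeasurableSet T := (meas_aux _).preimage (measurable_const_mul _)
  have hvolT : volume T = ENNReal.ofReal (C m) * volume (B m) := by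
    rw [hTsmul, MeasureTheory.Measure.addHaar_smul_of_nonneg volume hc0.le,
      Module.finrank_self, pow_one]
  have h1 : ENNReal.ofReal (11/8) < volume T := by
    rw [hvolT]
    calc ENNReal.ofReal (11/8) = ENNReal.ofReal (1/2) * ENNReal.ofReal (11/4) := by
          rw [← ENNReal.ofReal_mul (by norm_num)]; norm_num
      _ < ENNReal.ofReal (1/2) * volume (B m) := by
          refine (ENNReal.mul_lt_mul_iff_right ?_ ?_).2 hBm
          · exact (ENNReal.ofReal_pos.2 (by norm_num)).ne'
          · exact ofReal_ne_top
      _ ≤ ENNReal.ofReal (C m) * volume (B m) :=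
          mul_le_mul_left (ofReal_le_ofReal (hC1 m)) _
  have hne : (A m ∩ T).Nonempty := by
    rw [Set.nonempty_iff_ne_empty]
    intro hempty
    have hdisj : Disjoint (A m) T := Set.disjoint_iff_inter_eq_empty.2 hempty
    have hsub : A m ∪ T ⊆ Icc (1/2:ℝ) 4 := by
      rintro x (hx | hx)
      · exact ⟨le_trans (by norm_num) hx.1.1, hx.1.2⟩
      · have hx' : (C m)⁻¹ * x ∈ Icc (1:ℝ) 4 := hx.1
        constructor
        · calc (1/2:ℝ) ≤ C m := hC1 m
            _ = C m * 1 := (mul_one _).symm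
            _ ≤ C m * ((C m)⁻¹ * x) := by
                exact mul_le_mul_of_nonneg_left hx'.1 hc0.le
            _ = x := by field_simp
        · calc x = C m * ((C m)⁻¹ * x) := by field_simp
            _ ≤ C m * 4 := mul_le_mul_of_nonneg_left hx'.2 hc0.le
            _ ≤ 1 * 4 := by nlinarith [hC2 m]
            _ = 4 := one_mul 4
    have hle : volume (A m ∪ T) ≤ ENNReal.ofReal (7/2) := by
      refine le_trans (measure_mono hsub) ?_
      rw [Real.volume_Icc]
      exact ofReal_le_ofReal (by norm_num)
    have hbig : ENNReal.ofReal (33/8) < volume (A m) + volume T := by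
      rw [show (33/8 : ℝ) = 11/4 + 11/8 by norm_num,
        ENNReal.ofReal_add (by norm_num) (by norm_num)]
      exact ENNReal.add_lt_add hAm h1
    rw [← measure_union hdisj hTmeas] at hbig
    exact absurd ((ofReal_lt_ofReal_iff (by norm_num)).1 (hbig.trans_le hle)) (by norm_num)
  obtain ⟨u, huA, huT⟩ := hne
  have huIcc : u ∈ Icc (1:ℝ) 4 := huA.1
  have hdev1 : |Real.log (f (u * S m)) - Real.log (f (S m)) - p * Real.log u| ≤ ε/4 := huA.2
  have hvB : (C m)⁻¹ * u ∈ B m := huT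
  have hdev2 : |Real.log (f (((C m)⁻¹ * u) * (C m * S m))) - Real.log (f (C m * S m))
      - p * Real.log ((C m)⁻¹ * u)| ≤ ε/4 := hvB.2
  have hu0 : (0:ℝ) < u := lt_of_lt_of_le one_pos huIcc.1
  have hmul : ((C m)⁻¹ * u) * (C m * S m) = u * S m := by field_simp
  have hlogv : Real.log ((C m)⁻¹ * u) = Real.log u - Real.log (C m) := by
    rw [Real.log_mul (inv_ne_zero hc0.ne') hu0.ne', Real.log_inv]; ring
  rw [hmul, hlogv] at hdev2
  have habs := abs_sub (Real.log (f (u * S m)) - Real.log (f (S m)) - p * Real.log u)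
    (Real.log (f (u * S m)) - Real.log (f (C m * S m)) - p * (Real.log u - Real.log (C m)))
  have hrw : (Real.log (f (u * S m)) - Real.log (f (S m)) - p * Real.log u)
      - (Real.log (f (u * S m)) - Real.log (f (C m * S m)) - p * (Real.log u - Real.log (C m)))
      = Real.log (f (C m * S m)) - Real.log (f (S m)) - p * Real.log (C m) := by ring
  rw [hrw] at habs
  have := hdev m
  linarith [abs_nonneg (Real.log (f (C m * S m)) - Real.log (f (S m)) - p * Real.log (C m))]

lemma potter {f : ℝ → ℝ} {p : ℝ} (hf : Measurable f) (hfpos : ∀ s : ℝ, 0 < s → 0 < f s)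
    (hrv : RegularlyVaryingAtZero f p) {ε : ℝ} (hε : 0 < ε) :
    ∃ s₁ > (0:ℝ), ∃ C₁ > (0:ℝ), ∃ C₂ > (0:ℝ), ∀ u, 0 < u → u ≤ s₁ →
      C₁ * u ^ (p + ε) ≤ f u ∧ f u ≤ C₂ * u ^ (p - ε) := by
  have hlog2 : (0:ℝ) < Real.log 2 := Real.log_pos (by norm_num)
  obtain ⟨s₁, hs₁, huct⟩ := uct hf hfpos hrv (show (0:ℝ) < ε * Real.log 2 by positivity)
  have hchain : ∀ k : ℕ, ∀ w : ℝ, 0 < w → 2^k * w ≤ s₁ →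
      |Real.log (f w) - Real.log (f (2^k * w)) + p * k * Real.log 2|
        ≤ k * (ε * Real.log 2) := by
    intro k
    induction k with
    | zero => intro w hw _; simp
    | succ k ih =>
      intro w hw hle
      have h2w : (0:ℝ) < 2 * w := by linarith
      have hpow : (1:ℝ) ≤ 2^k := one_le_pow₀ (by norm_num)
      have hrearr : (2:ℝ)^(k+1) * w = 2^k * (2*w) := by ring
      have hle' : 2^k * (2*w) ≤ s₁ := by rw [← hrearr]; exact hle
      have h2wle : 2*w ≤ s₁ := by nlinarith
      have hstep := huct (2*w) h2w h2wle (1/2) le_rfl (by norm_num)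
      have hhalf : (1/2 : ℝ) * (2*w) = w := by ring
      rw [hhalf, Real.log_div one_ne_zero two_ne_zero, Real.log_one] at hstep
      have hih := ih (2*w) h2w hle'
      have key : Real.log (f w) - Real.log (f (2^(k+1) * w)) + p * (k+1) * Real.log 2
          = (Real.log (f w) - Real.log (f (2*w)) - p * (0 - Real.log 2))
            + (Real.log (f (2*w)) - Real.log (f (2^k * (2*w))) + p * k * Real.log 2) := by
        rw [hrearr]; push_cast; ring
      push_cast
      calc |Real.log (f w) - Real.log (f (2^(k+1) * w)) + p * ((k:ℝ)+1) * Real.log 2|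
          ≤ |Real.log (f w) - Real.log (f (2*w)) - p * (0 - Real.log 2)|
            + |Real.log (f (2*w)) - Real.log (f (2^k * (2*w))) + p * k * Real.log 2| := by
            rw [key]; exact abs_add_le _ _
        _ ≤ ε * Real.log 2 + k * (ε * Real.log 2) := add_le_add hstep hih
        _ = ((k:ℝ)+1) * (ε * Real.log 2) := by ring
  refine ⟨s₁, hs₁, Real.exp (Real.log (f s₁) - (p+ε) * Real.log s₁ - ε * Real.log 2),
    Real.exp_pos _, Real.exp (Real.log (f s₁) - (p-ε) * Real.log s₁ + ε * Real.log 2),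
    Real.exp_pos _, ?_⟩
  intro u hu hus
  set n : ℕ := ⌊Real.logb 2 (s₁/u)⌋₊ with hn
  have hratio1 : (1:ℝ) ≤ s₁ / u := (one_le_div hu).2 hus
  have hlogb0 : 0 ≤ Real.logb 2 (s₁/u) := Real.logb_nonneg (by norm_num) hratio1
  have hfl : (n:ℝ) ≤ Real.logb 2 (s₁/u) := Nat.floor_le hlogb0
  have hfl2 : Real.logb 2 (s₁/u) < n + 1 := Nat.lt_floor_add_one _
  have hlogbdef : Real.logb 2 (s₁/u) = (Real.log s₁ - Real.log u) / Real.log 2 := by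
    rw [Real.logb, Real.log_div hs₁.ne' hu.ne']
  have hnl : (n:ℝ) * Real.log 2 ≤ Real.log s₁ - Real.log u := by
    rw [hlogbdef] at hfl
    calc (n:ℝ) * Real.log 2 ≤ ((Real.log s₁ - Real.log u)/Real.log 2) * Real.log 2 :=
          mul_le_mul_of_nonneg_right hfl hlog2.le
      _ = Real.log s₁ - Real.log u := by field_simp
  have hnu : Real.log s₁ - Real.log u < ((n:ℝ)+1) * Real.log 2 := by
    rw [hlogbdef] at hfl2
    calc Real.log s₁ - Real.log u = ((Real.log s₁ - Real.log u)/Real.log 2) * Real.log 2 := by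
          field_simp
      _ < ((n:ℝ)+1) * Real.log 2 := mul_lt_mul_of_pos_right hfl2 hlog2
  -- 2^n * u ≤ s₁ and s₁ < 2^(n+1) * u
  have hpow_le : (2:ℝ)^n * u ≤ s₁ := by
    have hl : Real.log ((2:ℝ)^n * u) ≤ Real.log s₁ := by
      rw [Real.log_mul (by positivity) hu.ne', Real.log_pow]
      linarith
    have := Real.exp_le_exp.2 hl
    rwa [Real.exp_log (by positivity), Real.exp_log hs₁] at this
  have hpow_gt : s₁ < 2^(n+1) * u := by
    have hl : Real.log s₁ < Real.log ((2:ℝ)^(n+1) * u) := by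
      rw [Real.log_mul (by positivity) hu.ne', Real.log_pow]
      push_cast
      linarith
    have := Real.exp_lt_exp.2 hl
    rwa [Real.exp_log hs₁, Real.exp_log (by positivity)] at this
  have hch := hchain n u hu hpow_le
  -- last step: c = 2^n*u/s₁ ∈ (1/2, 1]
  set c : ℝ := 2^n * u / s₁ with hc
  have hc_pos : 0 < c := by positivity
  have hc_le : c ≤ 1 := (div_le_one hs₁).2 hpow_le
  have hc_half : 1/2 ≤ c := by
    rw [hc, le_div_iff₀ hs₁]
    have : (2:ℝ)^(n+1) = 2 * 2^n := by ring
    nlinarith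
  have hlast := huct s₁ hs₁ le_rfl c hc_half hc_le
  have hcs : c * s₁ = 2^n * u := div_mul_cancel₀ _ hs₁.ne'
  rw [hcs] at hlast
  have hlogc : Real.log c = (n:ℝ) * Real.log 2 + Real.log u - Real.log s₁ := by
    rw [hc, Real.log_div (by positivity) hs₁.ne', Real.log_mul (by positivity) hu.ne',
      Real.log_pow]
  rw [hlogc] at hlast
  -- combine
  have hcomb : |Real.log (f u) - Real.log (f s₁) - p * (Real.log u - Real.log s₁)|
      ≤ ε * (Real.log s₁ - Real.log u) + ε * Real.log 2 := by
    have habs := abs_add_le (Real.log (f u) - Real.log (f (2^n * u)) + p * n * Real.log 2)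
      (Real.log (f (2^n * u)) - Real.log (f s₁)
        - p * ((n:ℝ) * Real.log 2 + Real.log u - Real.log s₁))
    have hkey : (Real.log (f u) - Real.log (f (2^n * u)) + p * n * Real.log 2)
        + (Real.log (f (2^n * u)) - Real.log (f s₁)
          - p * ((n:ℝ) * Real.log 2 + Real.log u - Real.log s₁))
        = Real.log (f u) - Real.log (f s₁) - p * (Real.log u - Real.log s₁) := by ring
    rw [hkey] at habs
    have hb : (n:ℝ) * (ε * Real.log 2) ≤ ε * (Real.log s₁ - Real.log u) := by
      have h := mul_le_mul_of_nonneg_left hnl hε.le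
      calc (n:ℝ) * (ε * Real.log 2) = ε * ((n:ℝ) * Real.log 2) := by ring
        _ ≤ ε * (Real.log s₁ - Real.log u) := h
    linarith [habs, hch, hlast, hb]
  have habs1 := abs_le.1 hcomb
  constructor
  · have hlow : Real.log (f s₁) - (p+ε) * Real.log s₁ - ε * Real.log 2 + (p+ε) * Real.log u
        ≤ Real.log (f u) := by linarith [habs1.1]
    calc Real.exp (Real.log (f s₁) - (p+ε) * Real.log s₁ - ε * Real.log 2) * u ^ (p+ε)
        = Real.exp (Real.log (f s₁) - (p+ε) * Real.log s₁ - ε * Real.log 2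
            + (p+ε) * Real.log u) := by
          rw [Real.rpow_def_of_pos hu, ← Real.exp_add, mul_comm (Real.log u)]
      _ ≤ Real.exp (Real.log (f u)) := Real.exp_le_exp.2 hlow
      _ = f u := Real.exp_log (hfpos u hu)
  · have hup : Real.log (f u)
        ≤ Real.log (f s₁) - (p-ε) * Real.log s₁ + ε * Real.log 2 + (p-ε) * Real.log u := by
      linarith [habs1.2]
    calc f u = Real.exp (Real.log (f u)) := (Real.exp_log (hfpos u hu)).symm
      _ ≤ Real.exp (Real.log (f s₁) - (p-ε) * Real.log s₁ + ε * Real.log 2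
            + (p-ε) * Real.log u) := Real.exp_le_exp.2 hup
      _ = Real.exp (Real.log (f s₁) - (p-ε) * Real.log s₁ + ε * Real.log 2) * u ^ (p-ε) := by
          rw [Real.rpow_def_of_pos hu, ← Real.exp_add, mul_comm (Real.log u)]

lemma pow_rpow_comm {x : ℝ} (hx : 0 ≤ x) (n : ℕ) (y : ℝ) : (x^n)^y = (x^y)^n := by
  rw [← Real.rpow_natCast x n, ← Real.rpow_mul hx, mul_comm, Real.rpow_mul hx,
    Real.rpow_natCast]

lemma Fbound {Ω : Type*} [MeasurableSpace Ω] (μ : Measure Ω) (X : Ω → ℝ) {κ η : ℝ}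
    (hη : 0 < η)
    (hsmall : Tendsto (fun u => (μ {ω | X ω ≤ u}).toReal / u) (𝓝[>] (0 : ℝ)) (𝓝 κ)) :
    ∃ δ₀ > (0:ℝ), ∀ u, 0 < u → u ≤ δ₀ →
      (κ - η) * u ≤ (μ {ω | X ω ≤ u}).toReal ∧ (μ {ω | X ω ≤ u}).toReal ≤ (κ + η) * u := by
  have hev := hsmall.eventually (Metric.ball_mem_nhds κ hη)
  rw [eventually_nhdsWithin_iff, Metric.eventually_nhds_iff] at hev
  obtain ⟨ρ, hρ, hball⟩ := hev
  refine ⟨ρ/2, by positivity, fun u hu hu2 => ?_⟩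
  have hd : dist u 0 < ρ := by rw [Real.dist_eq, sub_zero, abs_of_pos hu]; linarith
  have hb := hball hd hu
  have hdist : |(μ {ω | X ω ≤ u}).toReal / u - κ| < η := by
    rwa [Real.dist_eq] at hb
  have habs := abs_lt.1 hdist
  have h1 : (κ - η) ≤ (μ {ω | X ω ≤ u}).toReal / u := by linarith
  have h2 : (μ {ω | X ω ≤ u}).toReal / u ≤ (κ + η) := by linarith
  constructor
  · calc (κ - η) * u ≤ ((μ {ω | X ω ≤ u}).toReal / u) * u :=
        mul_le_mul_of_nonneg_right h1 hu.le
      _ = (μ {ω | X ω ≤ u}).toReal := by field_simp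
  · calc (μ {ω | X ω ≤ u}).toReal = ((μ {ω | X ω ≤ u}).toReal / u) * u := by field_simp
      _ ≤ (κ + η) * u := mul_le_mul_of_nonneg_right h2 hu.le

theorem neg_moment_of_rv_at_zero {Ω : Type*} [MeasurableSpace Ω]
    (μ : Measure Ω) [IsProbabilityMeasure μ]
    (X : Ω → ℝ) (hX : Measurable X) (hXnonneg : ∀ ω, 0 ≤ X ω)
    (hXpos : ∀ᵐ ω ∂μ, 0 < X ω) (κ : ℝ) (hκ : 0 < κ)
    (hsmall : Tendsto (fun u => (μ {ω | X ω ≤ u}).toReal / u) (𝓝[>] (0 : ℝ)) (𝓝 κ))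
    (f : ℝ → ℝ) (hf : Measurable f) (hfpos : ∀ s : ℝ, 0 < s → 0 < f s)
    (p : ℝ) (hp : 0 < p) (hrv : RegularlyVaryingAtZero f p)
    (hinf : ∀ s₀ : ℝ, 0 < s₀ → 0 < sInf (f '' Set.Ici s₀)) :
    (p < 1 → ∫⁻ ω, ENNReal.ofReal (1 / f (X ω)) ∂μ < ∞) ∧
    (1 < p → ∫⁻ ω, ENNReal.ofReal (1 / f (X ω)) ∂μ = ∞) := by
  constructor
  · -- finite part
    intro hp1
    have hε : (0:ℝ) < (1 - p)/2 := by linarith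
    obtain ⟨s₁, hs₁, C₁, hC₁, C₂, hC₂, hpot⟩ := potter hf hfpos hrv hε
    set α : ℝ := p + (1-p)/2 with hαdef
    have hα1 : α < 1 := by rw [hαdef]; linarith
    have hα0 : 0 < α := by rw [hαdef]; linarith
    obtain ⟨δ₀, hδ₀, hF⟩ := Fbound μ X hκ hsmall
    set δ := min s₁ δ₀ with hδdef
    have hδ : 0 < δ := lt_min hs₁ hδ₀
    have hδs₁ : δ ≤ s₁ := min_le_left _ _
    have hδδ₀ : δ ≤ δ₀ := min_le_right _ _
    set q : ℕ → ℝ := fun n => δ * (1/2:ℝ)^n with hq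
    have hq0 : ∀ n, 0 < q n := by intro n; rw [hq]; positivity
    have hqle : ∀ n, q n ≤ δ := by
      intro n; rw [hq]
      exact mul_le_of_le_one_right hδ.le (pow_le_one₀ (by norm_num) (by norm_num))
    have hqsucc : ∀ n, q (n+1) = q n * (1/2) := by
      intro n; rw [hq]; simp only [pow_succ]; ring
    set shell : ℕ → Set Ω := fun n => {ω | q (n+1) < X ω ∧ X ω ≤ q n} with hshelldef
    have shell_meas : ∀ n, MeasurableSet (shell n) := fun n =>
      (measurableSet_lt measurable_const hX).inter (measurableSet_le hX measurable_const)
    have hm : 0 < sInf (f '' Ici δ) := hinf δ hδ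
    have hbdd : BddBelow (f '' Ici δ) := by
      refine ⟨0, ?_⟩
      rintro y ⟨s, hs, rfl⟩
      exact (hfpos s (lt_of_lt_of_le hδ hs)).le
    have hcover : (univ : Set Ω) ⊆
        {ω | X ω ≤ 0} ∪ ({ω | δ < X ω} ∪ ⋃ n, shell n) := by
      intro ω _
      rcases le_or_gt (X ω) 0 with h0 | h0
      · exact Or.inl h0
      rcases lt_or_ge δ (X ω) with h1 | h1
      · exact Or.inr (Or.inl h1)
      · refine Or.inr (Or.inr ?_)
        have hex : ∃ n, q (n+1) < X ω := by
          obtain ⟨n, hn⟩ := exists_pow_lt_of_lt_one (div_pos h0 hδ)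
            (show (1/2:ℝ) < 1 by norm_num)
          refine ⟨n, ?_⟩
          calc q (n+1) = q n * (1/2) := hqsucc n
            _ < q n := by nlinarith [hq0 n]
            _ = δ * (1/2)^n := by rw [hq]
            _ < δ * (X ω / δ) := mul_lt_mul_of_pos_left hn hδ
            _ = X ω := by field_simp
        refine mem_iUnion.2 ⟨Nat.find hex, Nat.find_spec hex, ?_⟩
        rcases Nat.eq_zero_or_pos (Nat.find hex) with h | h
        · rw [h]
          have : q 0 = δ := by rw [hq]; simp
          rw [this]; exact h1
        · obtain ⟨k, hk⟩ := Nat.exists_eq_add_of_lt h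
          rw [zero_add] at hk
          have hmin := Nat.find_min hex (show k < Nat.find hex by omega)
          push_neg at hmin
          rw [hk]
          exact hmin
    have huniv : {ω | X ω ≤ 0} ∪ ({ω | δ < X ω} ∪ ⋃ n, shell n) = (univ : Set Ω) :=
      eq_univ_of_univ_subset hcover
    -- piece over X ≤ 0 vanishes
    have h0int : ∫⁻ ω in {ω | X ω ≤ 0}, ENNReal.ofReal (1 / f (X ω)) ∂μ = 0 := by
      have hnull : μ {ω | X ω ≤ 0} = 0 := by
        refine measure_mono_null ?_ (ae_iff.1 hXpos)
        intro ω hω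
        simpa using not_lt.2 hω
      exact setLIntegral_measure_zero _ _ hnull
    -- piece over X > δ
    have h1int : ∫⁻ ω in {ω | δ < X ω}, ENNReal.ofReal (1 / f (X ω)) ∂μ
        ≤ ENNReal.ofReal (1 / sInf (f '' Ici δ)) := by
      calc ∫⁻ ω in {ω | δ < X ω}, ENNReal.ofReal (1 / f (X ω)) ∂μ
          ≤ ∫⁻ _ω in {ω | δ < X ω}, ENNReal.ofReal (1 / sInf (f '' Ici δ)) ∂μ := by
            refine setLIntegral_mono' (measurableSet_lt measurable_const hX) ?_
            intro ω hω
            have hXm : sInf (f '' Ici δ) ≤ f (X ω) :=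
              csInf_le hbdd ⟨X ω, Set.mem_Ici.2 (le_of_lt hω), rfl⟩
            exact ofReal_le_ofReal (one_div_le_one_div_of_le hm hXm)
        _ = ENNReal.ofReal (1 / sInf (f '' Ici δ)) * μ {ω | δ < X ω} :=
            setLIntegral_const _ _
        _ ≤ ENNReal.ofReal (1 / sInf (f '' Ici δ)) * 1 := by
            gcongr
            exact prob_le_one
        _ = ENNReal.ofReal (1 / sInf (f '' Ici δ)) := mul_one _
    -- shell pieces
    set K : ℝ := (2*κ*δ) / (C₁ * δ^α * (1/2:ℝ)^α) with hK
    set r : ℝ := (1/2:ℝ)^(1-α) with hr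
    have hrpos : 0 < r := by rw [hr]; positivity
    have hr1 : r < 1 := by
      rw [hr]
      exact Real.rpow_lt_one (by norm_num) (by norm_num) (by linarith)
    have hshellint : ∀ n, ∫⁻ ω in shell n, ENNReal.ofReal (1 / f (X ω)) ∂μ
        ≤ ENNReal.ofReal (K * r^n) := by
      intro n
      have hq1pos := hq0 (n+1)
      have hdenpos : 0 < C₁ * (q (n+1))^α := by positivity
      calc ∫⁻ ω in shell n, ENNReal.ofReal (1 / f (X ω)) ∂μ
          ≤ ∫⁻ _ω in shell n, ENNReal.ofReal (1 / (C₁ * (q (n+1))^α)) ∂μ := by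
            refine setLIntegral_mono' (shell_meas n) ?_
            intro ω hω
            obtain ⟨hlo, hhi⟩ := hω
            have hXpos' : 0 < X ω := lt_trans hq1pos hlo
            have hXle : X ω ≤ s₁ := le_trans (le_trans hhi (hqle n)) hδs₁
            have hlow := (hpot (X ω) hXpos' hXle).1
            have hrp : (q (n+1))^α ≤ (X ω)^α :=
              Real.rpow_le_rpow hq1pos.le hlo.le hα0.le
            have hfb : C₁ * (q (n+1))^α ≤ f (X ω) := by
              refine le_trans ?_ hlow
              have : C₁ * (q (n+1))^α ≤ C₁ * (X ω)^α :=
                mul_le_mul_of_nonneg_left hrp hC₁.le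
              calc C₁ * (q (n+1))^α ≤ C₁ * (X ω)^α := this
                _ = C₁ * (X ω)^(p + (1-p)/2) := by rw [hαdef]
            exact ofReal_le_ofReal (one_div_le_one_div_of_le hdenpos hfb)
        _ = ENNReal.ofReal (1 / (C₁ * (q (n+1))^α)) * μ (shell n) :=
            setLIntegral_const _ _
        _ ≤ ENNReal.ofReal (1 / (C₁ * (q (n+1))^α)) * ENNReal.ofReal (2*κ * q n) := by
            gcongr
            have hsub : shell n ⊆ {ω | X ω ≤ q n} := fun ω hω => hω.2
            have hle := (hF (q n) (hq0 n) (le_trans (hqle n) hδδ₀)).2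
            calc μ (shell n) ≤ μ {ω | X ω ≤ q n} := measure_mono hsub
              _ = ENNReal.ofReal ((μ {ω | X ω ≤ q n}).toReal) :=
                  (ofReal_toReal (measure_ne_top μ _)).symm
              _ ≤ ENNReal.ofReal (2*κ * q n) := by
                  refine ofReal_le_ofReal ?_
                  calc (μ {ω | X ω ≤ q n}).toReal ≤ (κ + κ) * q n := hle
                    _ = 2*κ * q n := by ring
        _ = ENNReal.ofReal (K * r^n) := by
            rw [← ofReal_mul (by positivity)]
            congr 1
            have hqn1 : q (n+1) = δ * (1/2:ℝ)^(n+1) := by rw [hq]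
            have hqn : q n = δ * (1/2:ℝ)^n := by rw [hq]
            have hexp : (q (n+1))^α = δ^α * ((1/2:ℝ)^α)^(n+1) := by
              rw [hqn1, Real.mul_rpow hδ.le (by positivity), pow_rpow_comm (by norm_num)]
            have hrval : r = (1/2:ℝ) / (1/2:ℝ)^α := by
              rw [hr, Real.rpow_sub (by norm_num), Real.rpow_one]
            have ha : (0:ℝ) < (1/2:ℝ)^α := by positivity
            have hd : (0:ℝ) < δ^α := by positivity
            rw [hexp, hqn, hK, hrval, div_pow]
            field_simp
            have h2 : ((1/2:ℝ))^n * 2^n = 1 := by rw [← mul_pow]; norm_num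
            have h3 : ((1/2:ℝ)^α)^n * ((1/2:ℝ)^α)⁻¹^n = 1 := by
              rw [← mul_pow, mul_inv_cancel₀ ha.ne', one_pow]
            linear_combination (-(1/2:ℝ)^α * (1/2:ℝ)^n * 2^n) * h3 - (1/2:ℝ)^α * h2
    -- assemble
    have hsum : ∑' n, ENNReal.ofReal (K * r^n)
        = ENNReal.ofReal K * (1 - ENNReal.ofReal r)⁻¹ := by
      have : ∀ n : ℕ, ENNReal.ofReal (K * r^n)
          = ENNReal.ofReal K * (ENNReal.ofReal r)^n := by
        intro n
        rw [ENNReal.ofReal_mul (by positivity), ENNReal.ofReal_pow hrpos.le]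
      rw [tsum_congr this, ENNReal.tsum_mul_left, ENNReal.tsum_geometric]
    have hgeo_ne_top : ENNReal.ofReal K * (1 - ENNReal.ofReal r)⁻¹ ≠ ∞ := by
      refine ENNReal.mul_ne_top ofReal_ne_top ?_
      rw [Ne, ENNReal.inv_eq_top]
      intro hzero
      have hlt : ENNReal.ofReal r < 1 := ENNReal.ofReal_lt_one.2 hr1
      exact (tsub_pos_of_lt hlt).ne' hzero
    calc ∫⁻ ω, ENNReal.ofReal (1 / f (X ω)) ∂μ
        = ∫⁻ ω in {ω | X ω ≤ 0} ∪ ({ω | δ < X ω} ∪ ⋃ n, shell n),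
            ENNReal.ofReal (1 / f (X ω)) ∂μ := by rw [huniv, setLIntegral_univ]
      _ ≤ ∫⁻ ω in {ω | X ω ≤ 0}, ENNReal.ofReal (1 / f (X ω)) ∂μ
          + ∫⁻ ω in {ω | δ < X ω} ∪ ⋃ n, shell n,
              ENNReal.ofReal (1 / f (X ω)) ∂μ := lintegral_union_le _ _ _
      _ ≤ 0 + (∫⁻ ω in {ω | δ < X ω}, ENNReal.ofReal (1 / f (X ω)) ∂μ
          + ∫⁻ ω in ⋃ n, shell n, ENNReal.ofReal (1 / f (X ω)) ∂μ) := by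
            rw [h0int]
            exact add_le_add le_rfl (lintegral_union_le _ _ _)
      _ ≤ 0 + (ENNReal.ofReal (1 / sInf (f '' Ici δ))
          + ∑' n, ENNReal.ofReal (K * r^n)) := by
            refine add_le_add le_rfl (add_le_add h1int ?_)
            refine le_trans (lintegral_iUnion_le _ _) ?_
            exact ENNReal.tsum_le_tsum hshellint
      _ < ∞ := by
          rw [zero_add, hsum]
          exact ENNReal.add_lt_top.2 ⟨ofReal_lt_top, lt_top_iff_ne_top.2 hgeo_ne_top⟩
  · intro hp2
    have hε : (0:ℝ) < (p - 1)/2 := by linarith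
    obtain ⟨s₁, hs₁, C₁, hC₁, C₂, hC₂, hpot⟩ := potter hf hfpos hrv hε
    set β : ℝ := p - (p-1)/2 with hβdef
    have hβ1 : 1 < β := by rw [hβdef]; linarith
    have hβ0 : 0 < β := by rw [hβdef]; linarith
    obtain ⟨δ₀, hδ₀, hF⟩ := Fbound μ X (show (0:ℝ) < κ/8 by positivity) hsmall
    set δ := min s₁ δ₀ with hδdef
    have hδ : 0 < δ := lt_min hs₁ hδ₀
    have hδs₁ : δ ≤ s₁ := min_le_left _ _
    have hδδ₀ : δ ≤ δ₀ := min_le_right _ _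
    set q : ℕ → ℝ := fun n => δ * (1/2:ℝ)^n with hq
    have hq0 : ∀ n, 0 < q n := by intro n; rw [hq]; positivity
    have hqle : ∀ n, q n ≤ δ := by
      intro n; rw [hq]
      exact mul_le_of_le_one_right hδ.le (pow_le_one₀ (by norm_num) (by norm_num))
    have hqsucc : ∀ n, q (n+1) = q n * (1/2) := by
      intro n; rw [hq]; simp only [pow_succ]; ring
    set shell : ℕ → Set Ω := fun n => {ω | q (n+1) < X ω ∧ X ω ≤ q n} with hshelldef
    have shell_meas : ∀ n, MeasurableSet (shell n) := fun n =>
      (measurableSet_lt measurable_const hX).inter (measurableSet_le hX measurable_const)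
    have hdisj : Pairwise (Function.onFun Disjoint shell) := by
      have key : ∀ a b : ℕ, a < b → Disjoint (shell a) (shell b) := by
        intro a b hab
        rw [Set.disjoint_left]
        intro ω hωa hωb
        have h1 : X ω ≤ q b := hωb.2
        have h2 : q (a+1) < X ω := hωa.1
        have hqba : q b ≤ q (a+1) := by
          rw [hq]
          exact mul_le_mul_of_nonneg_left
            (pow_le_pow_of_le_one (by norm_num) (by norm_num) hab) hδ.le
        linarith
      intro i j hij
      rcases hij.lt_or_gt with h | h
      · exact key _ _ h
      · exact (key _ _ h).symm
    have hμshell : ∀ n, ENNReal.ofReal ((5/16) * κ * q n) ≤ μ (shell n) := by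
      intro n
      have hsub : {ω | X ω ≤ q (n+1)} ⊆ {ω | X ω ≤ q n} := by
        intro ω h
        have : q (n+1) ≤ q n := by rw [hqsucc n]; nlinarith [hq0 n]
        exact le_trans h this
      have hsetveq : shell n = {ω | X ω ≤ q n} \ {ω | X ω ≤ q (n+1)} := by
        ext ω
        simp only [hshelldef, Set.mem_setOf_eq, Set.mem_diff, not_le]
        tauto
      have hdiff : μ (shell n) = μ {ω | X ω ≤ q n} - μ {ω | X ω ≤ q (n+1)} := by
        rw [hsetveq]
        exact measure_diff hsub
          (measurableSet_le hX measurable_const).nullMeasurableSet (measure_ne_top μ _)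
      have hlo := (hF (q n) (hq0 n) (le_trans (hqle n) hδδ₀)).1
      have hhi := (hF (q (n+1)) (hq0 (n+1)) (le_trans (hqle (n+1)) hδδ₀)).2
      have htr : (5/16) * κ * q n ≤ (μ (shell n)).toReal := by
        rw [hdiff, ENNReal.toReal_sub_of_le (measure_mono hsub) (measure_ne_top μ _)]
        have hhi' : (μ {ω | X ω ≤ q (n+1)}).toReal ≤ (κ + κ/8) * (q n * (1/2)) :=
          le_trans hhi (le_of_eq (by rw [hqsucc n]))
        nlinarith [hq0 n, hlo, hhi']
      calc ENNReal.ofReal ((5/16)*κ*q n) ≤ ENNReal.ofReal ((μ (shell n)).toReal) :=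
            ofReal_le_ofReal htr
        _ = μ (shell n) := ofReal_toReal (measure_ne_top μ _)
    have hterm : ∀ n : ℕ, ENNReal.ofReal ((5/16)*κ/C₂ * δ^(1-β))
        ≤ ∫⁻ ω in shell n, ENNReal.ofReal (1 / f (X ω)) ∂μ := by
      intro n
      have hqn := hq0 n
      have hqβ : (0:ℝ) < (q n)^β := by positivity
      have h1 : ∀ ω ∈ shell n, ENNReal.ofReal (1/(C₂ * (q n)^β))
          ≤ ENNReal.ofReal (1 / f (X ω)) := by
        intro ω hω
        have hXpos' : 0 < X ω := lt_trans (hq0 (n+1)) hω.1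
        have hXle : X ω ≤ s₁ := le_trans (le_trans hω.2 (hqle n)) hδs₁
        have hup := (hpot (X ω) hXpos' hXle).2
        have hfb : f (X ω) ≤ C₂ * (q n)^β := by
          refine le_trans hup ?_
          exact mul_le_mul_of_nonneg_left
            (Real.rpow_le_rpow hXpos'.le hω.2 hβ0.le) hC₂.le
        exact ofReal_le_ofReal (one_div_le_one_div_of_le (hfpos _ hXpos') hfb)
      calc ENNReal.ofReal ((5/16)*κ/C₂ * δ^(1-β))
          ≤ ENNReal.ofReal (1/(C₂ * (q n)^β) * ((5/16)*κ * q n)) := by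
            refine ofReal_le_ofReal ?_
            have hq_rpow : (q n)^(1-β) = q n / (q n)^β := by
              rw [Real.rpow_sub (hq0 n), Real.rpow_one]
            have hge : δ^(1-β) ≤ (q n)^(1-β) :=
              Real.rpow_le_rpow_of_nonpos (hq0 n) (hqle n) (by linarith)
            calc (5/16)*κ/C₂ * δ^(1-β) ≤ (5/16)*κ/C₂ * (q n)^(1-β) :=
                  mul_le_mul_of_nonneg_left hge (by positivity)
              _ = 1/(C₂ * (q n)^β) * ((5/16)*κ * q n) := by
                  rw [hq_rpow]
                  field_simp
        _ = ENNReal.ofReal (1/(C₂*(q n)^β)) * ENNReal.ofReal ((5/16)*κ*q n) :=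
            ofReal_mul (by positivity)
        _ ≤ ENNReal.ofReal (1/(C₂*(q n)^β)) * μ (shell n) := by
            gcongr
            exact hμshell n
        _ = ∫⁻ _ω in shell n, ENNReal.ofReal (1/(C₂*(q n)^β)) ∂μ :=
            (setLIntegral_const _ _).symm
        _ ≤ ∫⁻ ω in shell n, ENNReal.ofReal (1 / f (X ω)) ∂μ :=
            setLIntegral_mono' (shell_meas n) h1
    have hKne : ENNReal.ofReal ((5/16)*κ/C₂ * δ^(1-β)) ≠ 0 := by
      refine (ENNReal.ofReal_pos.2 ?_).ne'
      positivity
    have htop : (⊤:ℝ≥0∞) ≤ ∫⁻ ω, ENNReal.ofReal (1 / f (X ω)) ∂μ := by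
      calc (⊤:ℝ≥0∞) = ∑' _n : ℕ, ENNReal.ofReal ((5/16)*κ/C₂ * δ^(1-β)) :=
            (ENNReal.tsum_const_eq_top_of_ne_zero hKne).symm
        _ ≤ ∑' n, ∫⁻ ω in shell n, ENNReal.ofReal (1 / f (X ω)) ∂μ :=
            ENNReal.tsum_le_tsum hterm
        _ = ∫⁻ ω in ⋃ n, shell n, ENNReal.ofReal (1 / f (X ω)) ∂μ :=
            (lintegral_iUnion shell_meas hdisj _).symm
        _ ≤ ∫⁻ ω, ENNReal.ofReal (1 / f (X ω)) ∂μ := setLIntegral_le_lintegral _ _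
    exact top_le_iff.1 htop
end

section
/- Gronwall inequality with a nondecreasing Stieltjes driver: let g : [0,T] → ℝ be continuous and nondecreasing with g(0) = 0, let a ≥ 0 and b ≥ 0, and let u : [0,T] → [0,∞) be a bounded measurable function satisfying u(t) ≤ a + b·∫_{(0,t]} u(r) dg(r) for all t ∈ [0,T], where the integral is Lebesgue–Stieltjes with respect to g. Then u(t) ≤ a·exp(b·g(t)) for all t ∈ [0,T]. -/
open MeasureTheory

section Aux

private lemma step_ineq (b ci δ : ℝ) (hb : 0 ≤ b) (hδ : 0 ≤ δ) :
    b * (Real.exp (b * (ci + δ)) * δ) ≤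
      Real.exp (b * δ) * (Real.exp (b * (ci + δ)) - Real.exp (b * ci)) := by
  have h2 : Real.exp (b * (ci + δ)) = Real.exp (b * ci) * Real.exp (b * δ) := by
    rw [← Real.exp_add]; ring_nf
  have h1 : b * δ + 1 ≤ Real.exp (b * δ) := Real.add_one_le_exp _
  have h3 : 0 < Real.exp (b * ci) := Real.exp_pos _
  have h4 : 0 < Real.exp (b * δ) := Real.exp_pos _
  rw [h2]
  nlinarith [mul_nonneg hb hδ, mul_pos h3 h4]

private lemma p_chain (p : ℕ → ℝ) : ∀ n, (∀ i < n, p i ≤ p (i + 1)) → p 0 ≤ p n := by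
  intro n
  induction n with
  | zero => intro _; exact le_refl _
  | succ m ih =>
      intro h
      exact (ih fun i hi => h i (by omega)).trans (h m (by omega))

private lemma lintegral_Ioc_partition (ν : Measure ℝ) (f : ℝ → ENNReal) (p : ℕ → ℝ) :
    ∀ n, (∀ i < n, p i ≤ p (i + 1)) →
    ∫⁻ r in Set.Ioc (p 0) (p n), f r ∂ν
      = ∑ i ∈ Finset.range n, ∫⁻ r in Set.Ioc (p i) (p (i + 1)), f r ∂ν := by
  intro n
  induction n with
  | zero => intro _; simp
  | succ m ih =>
      intro hp
      have h1 : ∀ i < m, p i ≤ p (i + 1) := fun i hi => hp i (by omega)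
      have h0m : p 0 ≤ p m := p_chain p m h1
      have hmm : p m ≤ p (m + 1) := hp m (by omega)
      rw [← Set.Ioc_union_Ioc_eq_Ioc h0m hmm,
        lintegral_union measurableSet_Ioc (Set.Ioc_disjoint_Ioc_of_le le_rfl), ih h1,
        Finset.sum_range_succ]

private lemma chunk_bound (g : StieltjesFunction ℝ) (b : ℝ) (hb : 0 ≤ b) {s t : ℝ} (hst : s ≤ t) :
    ∫⁻ r in Set.Ioc s t, ENNReal.ofReal (Real.exp (b * g r)) ∂g.measure
      ≤ ENNReal.ofReal (Real.exp (b * g t) * (g t - g s)) := by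
  calc ∫⁻ r in Set.Ioc s t, ENNReal.ofReal (Real.exp (b * g r)) ∂g.measure
      ≤ ∫⁻ _ in Set.Ioc s t, ENNReal.ofReal (Real.exp (b * g t)) ∂g.measure := by
        refine setLIntegral_mono measurable_const fun r hr => ?_
        refine ENNReal.ofReal_le_ofReal (Real.exp_le_exp.2 ?_)
        have := g.mono hr.2
        nlinarith
    _ = ENNReal.ofReal (Real.exp (b * g t)) * g.measure (Set.Ioc s t) :=
        setLIntegral_const _ _
    _ = ENNReal.ofReal (Real.exp (b * g t) * (g t - g s)) := by
        rw [g.measure_Ioc, ← ENNReal.ofReal_mul (Real.exp_pos _).le]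

private lemma key_bound (g : StieltjesFunction ℝ) (hgcont : Continuous g) (hg0 : g 0 = 0)
    (b : ℝ) (hb : 0 ≤ b) (t : ℝ) (ht : 0 ≤ t) :
    b * (∫⁻ r in Set.Ioc 0 t, ENNReal.ofReal (Real.exp (b * g r)) ∂g.measure).toReal
      ≤ Real.exp (b * g t) - 1 := by
  set G : ℝ := g t with hGdef
  have hG : 0 ≤ G := by rw [hGdef, ← hg0]; exact g.mono ht
  set J : ENNReal := ∫⁻ r in Set.Ioc 0 t, ENNReal.ofReal (Real.exp (b * g r)) ∂g.measure with hJ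
  have main : ∀ n : ℕ, 0 < n →
      b * J.toReal ≤ Real.exp (b * G / (n : ℝ)) * (Real.exp (b * G) - 1) := by
    intro n hn
    have hnR : (0 : ℝ) < (n : ℝ) := by exact_mod_cast hn
    set δ : ℝ := G / n with hδdef
    have hδ : 0 ≤ δ := div_nonneg hG hnR.le
    set A : ℕ → Set ℝ := fun i => {x ∈ Set.Icc 0 t | (i : ℝ) * δ ≤ g x} with hAdef
    set p : ℕ → ℝ := fun i => if i < n then sInf (A i) else t with hpdef
    have hciG : ∀ i ≤ n, (i : ℝ) * δ ≤ G := by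
      intro i hi
      have : (i : ℝ) ≤ n := by exact_mod_cast hi
      calc (i : ℝ) * δ ≤ (n : ℝ) * δ := by nlinarith
        _ = G := by rw [hδdef]; field_simp
    have hci0 : ∀ i : ℕ, 0 ≤ (i : ℝ) * δ := fun i => mul_nonneg (Nat.cast_nonneg i) hδ
    have htA : ∀ i ≤ n, t ∈ A i := fun i hi => ⟨⟨ht, le_refl t⟩, by rw [← hGdef]; exact hciG i hi⟩
    have hAcl : ∀ i, IsClosed (A i) := by
      intro i
      have : A i = Set.Icc 0 t ∩ (⇑g) ⁻¹' Set.Ici ((i : ℝ) * δ) := by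
        ext x; simp [hAdef, Set.mem_Ici, and_comm]
      rw [this]
      exact isClosed_Icc.inter (isClosed_Ici.preimage hgcont)
    have hAbdd : ∀ i, BddBelow (A i) := fun i => ⟨0, fun x hx => hx.1.1⟩
    have hmem : ∀ i < n, sInf (A i) ∈ A i := fun i hi =>
      (hAcl i).csInf_mem ⟨t, htA i hi.le⟩ (hAbdd i)
    have hpIcc : ∀ i ≤ n, p i ∈ Set.Icc 0 t := by
      intro i hi
      by_cases h : i < n
      · simpa [hpdef, h] using (hmem i h).1
      · simp [hpdef, h, ht, Set.mem_Icc]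
    have hgp : ∀ i ≤ n, g (p i) = (i : ℝ) * δ := by
      intro i hi
      by_cases h : i < n
      · have hle : g (p i) ≤ (i : ℝ) * δ := by
          obtain ⟨x, hx, hgx⟩ : ∃ x ∈ Set.Icc (0:ℝ) t, g x = (i : ℝ) * δ := by
            have hsub : Set.Icc (g 0) (g t) ⊆ ⇑g '' Set.Icc 0 t :=
              intermediate_value_Icc ht hgcont.continuousOn
            have : (i : ℝ) * δ ∈ Set.Icc (g 0) (g t) := by
              rw [hg0, ← hGdef]; exact ⟨hci0 i, hciG i hi⟩
            obtain ⟨x, hx, hgx⟩ := hsub this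
            exact ⟨x, hx, hgx⟩
          have hxA : x ∈ A i := ⟨hx, hgx.ge⟩
          have : p i ≤ x := by simpa [hpdef, h] using csInf_le (hAbdd i) hxA
          calc g (p i) ≤ g x := g.mono this
            _ = (i : ℝ) * δ := hgx
        have hge : (i : ℝ) * δ ≤ g (p i) := by simpa [hpdef, h] using (hmem i h).2
        linarith
      · have hin : i = n := by omega
        have : p i = t := by simp [hpdef, h]
        rw [this, ← hGdef, hin]
        rw [hδdef]; field_simp
    have hpmono : ∀ i < n, p i ≤ p (i + 1) := by
      intro i hi
      by_cases h : i + 1 < n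
      · have hsub : A (i + 1) ⊆ A i := by
          intro x hx
          refine ⟨hx.1, le_trans ?_ hx.2⟩
          have : (i : ℝ) ≤ (i : ℝ) + 1 := by linarith
          push_cast
          nlinarith
        simpa [hpdef, hi, h] using
          csInf_le_csInf (hAbdd i) ⟨t, htA (i + 1) h.le⟩ hsub
      · have h1 : p (i + 1) = t := by simp [hpdef, h]
        rw [h1]
        exact (hpIcc i hi.le).2
    have hp0 : p 0 = 0 := by
      have h0A : (0 : ℝ) ∈ A 0 := ⟨⟨le_refl 0, ht⟩, by simp [hg0]⟩
      have h1 : p 0 ≤ 0 := by simpa [hpdef, hn] using csInf_le (hAbdd 0) h0A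
      exact le_antisymm h1 (hpIcc 0 (Nat.zero_le n)).1
    have hpn : p n = t := by simp [hpdef]
    -- split the integral
    have hsplit : J = ∑ i ∈ Finset.range n,
        ∫⁻ r in Set.Ioc (p i) (p (i + 1)), ENNReal.ofReal (Real.exp (b * g r)) ∂g.measure := by
      rw [hJ, ← hp0, ← hpn]
      exact lintegral_Ioc_partition g.measure _ p n hpmono
    set Ji : ℕ → ENNReal := fun i =>
      ∫⁻ r in Set.Ioc (p i) (p (i + 1)), ENNReal.ofReal (Real.exp (b * g r)) ∂g.measure with hJi
    have hJile : ∀ i < n, Ji i ≤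
        ENNReal.ofReal (Real.exp (b * ((i : ℝ) * δ + δ)) * δ) := by
      intro i hi
      have h1 : Ji i ≤ ENNReal.ofReal (Real.exp (b * g (p (i+1))) * (g (p (i+1)) - g (p i))) :=
        chunk_bound g b hb (hpmono i hi)
      have h2 : g (p (i + 1)) = (i : ℝ) * δ + δ := by
        rw [hgp (i + 1) (by omega)]; push_cast; ring
      have h3 : g (p i) = (i : ℝ) * δ := hgp i hi.le
      rw [h2, h3] at h1
      simpa using h1
    have hJine : ∀ i ∈ Finset.range n, Ji i ≠ ⊤ := by
      intro i hi
      exact ne_top_of_le_ne_top ENNReal.ofReal_ne_top (hJile i (Finset.mem_range.1 hi))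
    have htoReal : J.toReal = ∑ i ∈ Finset.range n, (Ji i).toReal := by
      rw [hsplit]; exact ENNReal.toReal_sum hJine
    have hterm : ∀ i ∈ Finset.range n, b * (Ji i).toReal ≤
        Real.exp (b * δ) * (Real.exp (b * ((i:ℝ) * δ + δ)) - Real.exp (b * ((i:ℝ) * δ))) := by
      intro i hi
      have hi' := Finset.mem_range.1 hi
      have h1 : (Ji i).toReal ≤ Real.exp (b * ((i : ℝ) * δ + δ)) * δ := by
        have := ENNReal.toReal_mono ENNReal.ofReal_ne_top (hJile i hi')
        rwa [ENNReal.toReal_ofReal (mul_nonneg (Real.exp_pos _).le hδ)] at this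
      calc b * (Ji i).toReal ≤ b * (Real.exp (b * ((i : ℝ) * δ + δ)) * δ) := by
            exact mul_le_mul_of_nonneg_left h1 hb
        _ ≤ Real.exp (b * δ) * (Real.exp (b * ((i:ℝ) * δ + δ)) - Real.exp (b * ((i:ℝ) * δ))) :=
            step_ineq b ((i : ℝ) * δ) δ hb hδ
    have hsum : b * J.toReal ≤ Real.exp (b * δ) * (Real.exp (b * G) - 1) := by
      rw [htoReal, Finset.mul_sum]
      calc ∑ i ∈ Finset.range n, b * (Ji i).toReal
          ≤ ∑ i ∈ Finset.range n,
            Real.exp (b * δ) * (Real.exp (b * ((i:ℝ) * δ + δ)) - Real.exp (b * ((i:ℝ) * δ))) :=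
            Finset.sum_le_sum hterm
        _ = Real.exp (b * δ) * ∑ i ∈ Finset.range n,
            (Real.exp (b * (((i:ℝ) + 1) * δ)) - Real.exp (b * ((i:ℝ) * δ))) := by
            rw [← Finset.mul_sum]
            congr 1
            refine Finset.sum_congr rfl fun i _ => ?_
            ring_nf
        _ = Real.exp (b * δ) * (Real.exp (b * ((n:ℝ) * δ)) - Real.exp (b * ((0:ℝ) * δ))) := by
            congr 1
            have := Finset.sum_range_sub (fun i : ℕ => Real.exp (b * ((i:ℝ) * δ))) n
            simpa using this
        _ = Real.exp (b * δ) * (Real.exp (b * G) - 1) := by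
            have hnδ : (n : ℝ) * δ = G := by rw [hδdef]; field_simp
            rw [hnδ]; simp
    have hbδ : b * δ = b * G / (n : ℝ) := by rw [hδdef]; ring
    rwa [hbδ] at hsum
  -- take n → ∞
  have hlim : Filter.Tendsto (fun n : ℕ => Real.exp (b * G / (n : ℝ)) * (Real.exp (b * G) - 1))
      Filter.atTop (nhds (Real.exp (b * G) - 1)) := by
    have h1 : Filter.Tendsto (fun n : ℕ => b * G / (n : ℝ)) Filter.atTop (nhds 0) :=
      tendsto_const_div_atTop_nhds_zero_nat (b * G)
    have h2 : Filter.Tendsto (fun n : ℕ => Real.exp (b * G / (n : ℝ))) Filter.atTop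
        (nhds 1) := by
      have := (Real.continuous_exp.tendsto 0).comp h1
      simpa [Function.comp_def] using this
    simpa using h2.mul_const (Real.exp (b * G) - 1)
  refine ge_of_tendsto hlim ?_
  filter_upwards [Filter.eventually_ge_atTop 1] with n hn
  exact main n hn

end Aux

theorem gronwall_stieltjes (g : StieltjesFunction ℝ)
    (hgcont : Continuous g) (hg0 : g 0 = 0)
    (T : ℝ) (hT : 0 < T) (a b : ℝ) (ha : 0 ≤ a) (hb : 0 ≤ b)
    (u : ℝ → ℝ) (hu : Measurable u) (hunonneg : ∀ t, 0 ≤ u t)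
    (C : ℝ) (hbdd : ∀ t, u t ≤ C)
    (hineq : ∀ t ∈ Set.Icc (0 : ℝ) T,
      u t ≤ a + b * (∫⁻ r in Set.Ioc 0 t, ENNReal.ofReal (u r) ∂g.measure).toReal) :
    ∀ t ∈ Set.Icc (0 : ℝ) T, u t ≤ a * Real.exp (b * g t) := by
  set q : ℝ := Real.exp (-(b * g T)) with hqdef
  have hgT : 0 ≤ g T := by rw [← hg0]; exact g.mono hT.le
  have hq0 : 0 < q := Real.exp_pos _
  have hq1 : q ≤ 1 := Real.exp_le_one_iff.2 (by nlinarith)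
  set c0 : ℝ := max C a - a with hc0def
  have hc0 : 0 ≤ c0 := by simp [hc0def, le_max_right]
  have hgnn : ∀ t ∈ Set.Icc (0:ℝ) T, 0 ≤ g t := by
    intro t ht; rw [← hg0]; exact g.mono ht.1
  set k : ℕ → ℝ := fun m => a + (1 - q) ^ m * c0 with hkdef
  have hkge : ∀ m, a ≤ k m := by
    intro m
    have : 0 ≤ (1 - q) ^ m * c0 := mul_nonneg (pow_nonneg (by linarith) m) hc0
    simp [hkdef]; linarith
  have hmain : ∀ m, ∀ t ∈ Set.Icc (0:ℝ) T, u t ≤ k m * Real.exp (b * g t) := by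
    intro m
    induction m with
    | zero =>
        intro t ht
        have h1 : (1:ℝ) ≤ Real.exp (b * g t) :=
          Real.one_le_exp (mul_nonneg hb (hgnn t ht))
        have h2 : u t ≤ max C a := le_trans (hbdd t) (le_max_left C a)
        have h3 : k 0 = max C a := by simp [hkdef, hc0def]
        have h4 : 0 ≤ max C a := le_trans (hunonneg t) h2
        calc u t ≤ max C a := h2
          _ = max C a * 1 := by ring
          _ ≤ max C a * Real.exp (b * g t) := by nlinarith
          _ = k 0 * Real.exp (b * g t) := by rw [h3]
    | succ m ih =>
        intro t ht
        have hkm0 : 0 ≤ k m := le_trans ha (hkge m)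
        have ht0 : 0 ≤ t := ht.1
        set E : ℝ := Real.exp (b * g t) with hEdef
        have hE1 : (1:ℝ) ≤ E := Real.one_le_exp (mul_nonneg hb (hgnn t ht))
        -- bound the integral
        have hmeas : Measurable fun r => ENNReal.ofReal (k m * Real.exp (b * g r)) :=
          ENNReal.measurable_ofReal.comp
            ((measurable_const.mul (Real.measurable_exp.comp
              (measurable_const.mul g.mono.measurable))))
        have hmono : ∫⁻ r in Set.Ioc 0 t, ENNReal.ofReal (u r) ∂g.measure
            ≤ ∫⁻ r in Set.Ioc 0 t, ENNReal.ofReal (k m * Real.exp (b * g r)) ∂g.measure := by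
          refine setLIntegral_mono hmeas fun r hr => ?_
          exact ENNReal.ofReal_le_ofReal (ih r ⟨hr.1.le, hr.2.trans ht.2⟩)
        set J : ENNReal :=
          ∫⁻ r in Set.Ioc 0 t, ENNReal.ofReal (Real.exp (b * g r)) ∂g.measure with hJdef
        have hconst : ∫⁻ r in Set.Ioc 0 t, ENNReal.ofReal (k m * Real.exp (b * g r)) ∂g.measure
            = ENNReal.ofReal (k m) * J := by
          rw [hJdef]
          simp_rw [ENNReal.ofReal_mul hkm0]
          exact lintegral_const_mul _ (ENNReal.measurable_ofReal.comp
            (Real.measurable_exp.comp (measurable_const.mul g.mono.measurable)))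
        have hJfin : J ≠ ⊤ :=
          ne_top_of_le_ne_top ENNReal.ofReal_ne_top (chunk_bound g b hb ht0)
        have hstep : u t ≤ a + k m * (b * J.toReal) := by
          have h1 := hineq t ht
          have h2 : (∫⁻ r in Set.Ioc 0 t, ENNReal.ofReal (u r) ∂g.measure).toReal
              ≤ k m * J.toReal := by
            have hKJfin : ENNReal.ofReal (k m) * J ≠ ⊤ :=
              ENNReal.mul_ne_top ENNReal.ofReal_ne_top hJfin
            have h3 := ENNReal.toReal_mono (hconst ▸ hKJfin) hmono
            rw [hconst, ENNReal.toReal_mul, ENNReal.toReal_ofReal hkm0] at h3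
            exact h3
          calc u t ≤ a + b * (∫⁻ r in Set.Ioc 0 t, ENNReal.ofReal (u r) ∂g.measure).toReal := h1
            _ ≤ a + b * (k m * J.toReal) := by
                have := mul_le_mul_of_nonneg_left h2 hb
                linarith
            _ = a + k m * (b * J.toReal) := by ring
        have hkey : b * J.toReal ≤ E - 1 := by
          rw [hJdef, hEdef]
          exact key_bound g hgcont hg0 b hb t ht0
        have h4 : u t ≤ a + k m * (E - 1) := by nlinarith [mul_nonneg hkm0 (sub_nonneg.2 hE1)]
        -- final algebra
        have hqE : q * E ≤ 1 := by
          rw [hqdef, hEdef, ← Real.exp_add]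
          refine Real.exp_le_one_iff.2 ?_
          have : g t ≤ g T := g.mono ht.2
          nlinarith
        have hc : 0 ≤ (1 - q) ^ m * c0 := mul_nonneg (pow_nonneg (by linarith) m) hc0
        have hgoal : a + k m * (E - 1) ≤ k (m + 1) * E := by
          have hk1 : k m = a + (1 - q) ^ m * c0 := rfl
          have hk2 : k (m + 1) = a + (1 - q) * ((1 - q) ^ m * c0) := by
            simp [hkdef, pow_succ]; ring
          set c : ℝ := (1 - q) ^ m * c0 with hcdef
          rw [hk1, hk2]
          have : c * (1 - q * E) ≥ 0 := mul_nonneg hc (by nlinarith)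
          nlinarith
        linarith
  -- pass to the limit m → ∞
  intro t ht
  set E : ℝ := Real.exp (b * g t) with hEdef
  have hlim : Filter.Tendsto (fun m : ℕ => k m * E) Filter.atTop (nhds (a * E)) := by
    have h1 : Filter.Tendsto (fun m : ℕ => (1 - q) ^ m) Filter.atTop (nhds 0) :=
      tendsto_pow_atTop_nhds_zero_of_lt_one (by linarith) (by linarith)
    have h2 : Filter.Tendsto (fun m : ℕ => k m) Filter.atTop (nhds a) := by
      have := (h1.mul_const c0).const_add a
      simpa [hkdef] using this
    simpa using h2.mul_const E
  exact ge_of_tendsto hlim (Filter.Eventually.of_forall fun m => hmain m t ht)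
end
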